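/- Two barcodes with finitely many semi-infinite bars lie in the same path component of the space of barcodes (with the bottleneck metric) if and only if they have the same number of semi-infinite bars. In particular, the connected components of 𝓑̂ are indexed by the number of semi-infinite bars, and each connected component is path-connected. -/

import Mathlib

open scoped ENNReal

/-- A bar `(a, b]`, where the second component `⊤ : EReal` encodes a
semi-infinite bar `(a, +∞)`. -/
abbrev Bar := ℝ × EReal

namespace Bar

/-- A bar is valid when it describes a non-empty interval. -/
def IsValid (I : Bar) : Prop := (I.1 : EReal) < I.2

/-- The length of a bar. -/
noncomputable def length (I : Bar) : EReal := I.2 - (I.1 : EReal)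

/-- The interval `(a, b]` (or `(a, +∞)`) underlying a bar, as a subset of `ℝ`. -/
def toSet (I : Bar) : Set ℝ := {x | I.1 < x ∧ (x : EReal) ≤ I.2}

/-- The `δ`-thickening `I^{-δ}` of a bar: `(a, b]` becomes `(a - δ, b + δ]`
and `(a, +∞)` becomes `(a - δ, +∞)`. -/
noncomputable def thicken (δ : ℝ) (I : Bar) : Bar := (I.1 - δ, I.2 + (δ : EReal))

/-- The shift of a bar by `c ∈ ℝ`. -/
noncomputable def shift (c : ℝ) (I : Bar) : Bar := (I.1 + c, I.2 + (c : EReal))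

/-- A bar is semi-infinite when its right end point is `+∞`. -/
def IsInfinite (I : Bar) : Prop := I.2 = ⊤

lemma length_shift (c : ℝ) (I : Bar) : (I.shift c).length = I.length := by
  obtain ⟨a, b⟩ := I
  induction b using EReal.rec with
  | bot => simp [shift, length]
  | top => show (⊤ : EReal) - ((a + c : ℝ) : EReal) = ⊤ - (a : EReal); rw [EReal.top_sub_coe, EReal.top_sub_coe]
  | coe b =>
      show ((b : EReal) + (c : EReal)) - ((a + c : ℝ) : EReal) = (b : EReal) - (a : EReal)
      norm_cast
      ring

lemma IsValid.shift {I : Bar} (h : I.IsValid) (c : ℝ) : (I.shift c).IsValid := by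
  obtain ⟨a, b⟩ := I
  show ((a + c : ℝ) : EReal) < b + (c : EReal)
  push_cast
  exact EReal.add_lt_add_right_coe h c

end Bar

/-- A barcode: a multiset of valid bars (encoded by an indexed family), such
that for every `ε > 0` only finitely many bars have length at least `ε`. -/
structure Barcode where
  ι : Type
  bar : ι → Bar
  valid : ∀ i, (bar i).IsValid
  finLong : ∀ ε : ℝ, 0 < ε → {i | (ε : EReal) ≤ (bar i).length}.Finite

namespace Barcode

/-- Equality of barcodes as multisets of bars: there is a bijection between the
index sets commuting with the bars. -/
def Equiv (B B' : Barcode) : Prop :=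
  ∃ e : B.ι ≃ B'.ι, ∀ i, B'.bar (e i) = B.bar i

/-- A `δ`-matching between two barcodes: one deletes, in both barcodes, some
bars of length at most `2δ`, and finds a bijection `φ` between the remaining
bars such that `φ(I) = J` implies `I ⊆ J^{-δ}` and `J ⊆ I^{-δ}`. -/
structure Matching (δ : ℝ) (B B' : Barcode) where
  del : Set B.ι
  del' : Set B'.ι
  del_short : ∀ i ∈ del, (B.bar i).length ≤ ((2 * δ : ℝ) : EReal)
  del'_short : ∀ j ∈ del', (B'.bar j).length ≤ ((2 * δ : ℝ) : EReal)
  φ : ↥(delᶜ) ≃ ↥(del'ᶜ)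
  subset : ∀ i : ↥(delᶜ), (B.bar i).toSet ⊆ (Bar.thicken δ (B'.bar (φ i))).toSet
  subset' : ∀ i : ↥(delᶜ), (B'.bar (φ i)).toSet ⊆ (Bar.thicken δ (B.bar i)).toSet

/-- The bottleneck distance between two barcodes (`⊤` if no matching exists). -/
noncomputable def dBottle (B B' : Barcode) : ℝ≥0∞ :=
  sInf (ENNReal.ofReal '' {δ : ℝ | 0 ≤ δ ∧ Nonempty (Matching δ B B')})

/-- The shift of a barcode by `c ∈ ℝ`, denoted `B[c]`. -/
noncomputable def shift (c : ℝ) (B : Barcode) : Barcode where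
  ι := B.ι
  bar i := (B.bar i).shift c
  valid i := (B.valid i).shift c
  finLong ε hε := by simpa [Bar.length_shift] using B.finLong ε hε

/-- `σ^∞(B)`: the number of semi-infinite bars of `B`. -/
noncomputable def sigmaInf (B : Barcode) : ℕ :=
  Nat.card {i : B.ι // (B.bar i).IsInfinite}

/-- The quotient pseudo-distance on the space `𝓑̂` of barcodes modulo overall
shift: `δ([B], [B']) = inf_c d_bottle(B, B'[c])`. -/
noncomputable def dHat (B B' : Barcode) : ℝ≥0∞ :=
  ⨅ c : ℝ, dBottle B (B'.shift c)

end Barcode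


section Aux

open Barcode

namespace BarcodeAux

/-! ### Elementary real-valued helpers -/

/-- Clamp a real number to `[0,1]`. -/
noncomputable def clamp (x : ℝ) : ℝ := min 1 (max 0 x)

lemma clamp_nonneg (x : ℝ) : 0 ≤ clamp x := le_min zero_le_one (le_max_left _ _)

lemma clamp_le_one (x : ℝ) : clamp x ≤ 1 := min_le_left _ _

lemma clamp_of_nonpos {x : ℝ} (h : x ≤ 0) : clamp x = 0 := by
  simp [clamp, max_eq_left h]

lemma clamp_of_one_le {x : ℝ} (h : 1 ≤ x) : clamp x = 1 := by
  have h0 : max 0 x = x := max_eq_right (zero_le_one.trans h)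
  simp [clamp, h0, min_eq_left h]

lemma clamp_pos {x : ℝ} (h : 0 < x) : 0 < clamp x :=
  lt_min one_pos (lt_max_iff.mpr (Or.inr h))

lemma clamp_lip (x y : ℝ) : |clamp x - clamp y| ≤ |x - y| := by
  have h1 : x - y ≤ |x - y| := le_abs_self _
  have h2 : -(|x - y|) ≤ x - y := neg_abs_le _
  rw [abs_sub_le_iff]
  unfold clamp
  constructor <;> simp only [min_def, max_def] <;> split_ifs <;> linarith

lemma clamp_lip_a (s t : ℝ) : |clamp (2*s) - clamp (2*t)| ≤ 2*|s-t| := by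
  have h := clamp_lip (2*s) (2*t)
  have : |2*s - 2*t| = 2*|s-t| := by
    rw [show 2*s - 2*t = 2*(s-t) by ring, abs_mul]
    norm_num
  linarith [h, this.le, this.ge]

lemma clamp_lip_b (s t : ℝ) : |clamp (1-2*s) - clamp (1-2*t)| ≤ 2*|s-t| := by
  have h := clamp_lip (1-2*s) (1-2*t)
  have : |(1-2*s) - (1-2*t)| = 2*|s-t| := by
    rw [show (1-2*s) - (1-2*t) = 2*(t-s) by ring, abs_mul, abs_sub_comm t s]
    norm_num
  linarith [h, this.le]

lemma clamp_lip_c (s t : ℝ) : |clamp (2*s-1) - clamp (2*t-1)| ≤ 2*|s-t| := by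
  have h := clamp_lip (2*s-1) (2*t-1)
  have : |(2*s-1) - (2*t-1)| = 2*|s-t| := by
    rw [show (2*s-1) - (2*t-1) = 2*(s-t) by ring, abs_mul]
    norm_num
  linarith [h, this.le]

/-! ### Bars -/

/-- The real length of a (finite) bar. -/
noncomputable def realLen (I : Bar) : ℝ := I.2.toReal - I.1

lemma ne_bot_of_valid {I : Bar} (hv : I.IsValid) : I.2 ≠ ⊥ :=
  ((EReal.bot_lt_coe I.1).trans hv).ne'

lemma snd_eq {I : Bar} (hv : I.IsValid) (h : ¬ I.IsInfinite) :
    I.2 = ((I.1 + realLen I : ℝ) : EReal) := by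
  have : I.1 + realLen I = I.2.toReal := by unfold realLen; ring
  rw [this, EReal.coe_toReal h (ne_bot_of_valid hv)]

lemma realLen_pos {I : Bar} (hv : I.IsValid) (h : ¬ I.IsInfinite) : 0 < realLen I := by
  have h2 := snd_eq hv h
  have := hv
  rw [Bar.IsValid, h2, EReal.coe_lt_coe_iff] at this
  linarith

lemma length_mk_real (a r : ℝ) :
    Bar.length (a, ((a + r : ℝ) : EReal)) = (r : EReal) := by
  rw [Bar.length]
  show ((a + r : ℝ) : EReal) - (a : ℝ) = (r : ℝ)
  rw [← EReal.coe_sub]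
  norm_num

lemma length_fin {I : Bar} (hv : I.IsValid) (h : ¬ I.IsInfinite) :
    I.length = ((realLen I : ℝ) : EReal) := by
  have h2 := snd_eq hv h
  rw [Bar.length, h2, ← EReal.coe_sub]
  norm_num

lemma length_top {I : Bar} (h : I.IsInfinite) : I.length = ⊤ := by
  rw [Bar.length, h, EReal.top_sub_coe]

/-- Two bars are `δ`-close if their endpoints are within `δ`. -/
def Close (δ : ℝ) (I J : Bar) : Prop :=
  |I.1 - J.1| ≤ δ ∧ I.2 ≤ J.2 + (δ : EReal) ∧ J.2 ≤ I.2 + (δ : EReal)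

lemma Close.symm {δ : ℝ} {I J : Bar} (h : Close δ I J) : Close δ J I :=
  ⟨by rw [abs_sub_comm]; exact h.1, h.2.2, h.2.1⟩

lemma Close.subset {δ : ℝ} {I J : Bar} (h : Close δ I J) :
    I.toSet ⊆ (Bar.thicken δ J).toSet := by
  rintro x ⟨hx1, hx2⟩
  have hab := abs_le.mp h.1
  refine ⟨by simp only [Bar.thicken]; linarith, ?_⟩
  show (x : EReal) ≤ J.2 + (δ : EReal)
  exact hx2.trans h.2.1

/-! ### Matchings : generalities -/

/-- Matchings are symmetric. -/
noncomputable def _root_.Barcode.Matching.symm {δ : ℝ} {B C : Barcode}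
    (m : Matching δ B C) : Matching δ C B where
  del := m.del'
  del' := m.del
  del_short := m.del'_short
  del'_short := m.del_short
  φ := m.φ.symm
  subset := fun j => by
    have h := m.subset' (m.φ.symm j)
    rwa [Equiv.apply_symm_apply] at h
  subset' := fun j => by
    have h := m.subset (m.φ.symm j)
    rwa [Equiv.apply_symm_apply] at h

lemma matching_congrLeft {δ : ℝ} {B₁ B₂ C : Barcode} (h : Barcode.Equiv B₁ B₂)
    (hm : Nonempty (Matching δ B₂ C)) : Nonempty (Matching δ B₁ C) := by
  obtain ⟨e, he⟩ := h
  obtain ⟨m⟩ := hm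
  refine ⟨{
    del := e ⁻¹' m.del
    del' := m.del'
    del_short := fun i hi => by rw [← he i]; exact m.del_short (e i) hi
    del'_short := m.del'_short
    φ := (e.subtypeEquiv (fun a => Iff.rfl)).trans m.φ
    subset := fun i => by
      have h2 := m.subset ((e.subtypeEquiv (fun a => Iff.rfl)) i)
      rw [← he (i : B₁.ι)]
      exact h2
    subset' := fun i => by
      have h2 := m.subset' ((e.subtypeEquiv (fun a => Iff.rfl)) i)
      rw [← he (i : B₁.ι)]
      exact h2 }⟩

lemma matching_congrRight {δ : ℝ} {B C₁ C₂ : Barcode} (h : Barcode.Equiv C₁ C₂)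
    (hm : Nonempty (Matching δ B C₂)) : Nonempty (Matching δ B C₁) := by
  obtain ⟨m⟩ := hm
  obtain ⟨m'⟩ := matching_congrLeft h ⟨m.symm⟩
  exact ⟨m'.symm⟩

lemma bar_shift_zero (I : Bar) : Bar.shift 0 I = I := by
  obtain ⟨a, b⟩ := I
  unfold Bar.shift
  simp

lemma equiv_shift_zero (C : Barcode) : Barcode.Equiv (C.shift 0) C :=
  ⟨Equiv.refl _, fun i => (bar_shift_zero (C.bar i)).symm⟩

lemma equiv_of_eq {B C : Barcode} (h : B = C) : Barcode.Equiv B C := by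
  subst h; exact ⟨Equiv.refl _, fun _ => rfl⟩

lemma dHat_le_of_matching {δ : ℝ} {B C : Barcode} (hδ : 0 ≤ δ)
    (h : Nonempty (Matching δ B C)) : Barcode.dHat B C ≤ ENNReal.ofReal δ := by
  have h0 : Nonempty (Matching δ B (C.shift 0)) :=
    matching_congrRight (equiv_shift_zero C) h
  calc Barcode.dHat B C ≤ Barcode.dBottle B (C.shift 0) := iInf_le _ 0
    _ ≤ ENNReal.ofReal δ := sInf_le (Set.mem_image_of_mem _ ⟨hδ, h0⟩)

/-! ### Matchings preserve the number of semi-infinite bars -/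

lemma infinite_notMem_del {δ : ℝ} {B C : Barcode} (m : Matching δ B C) {i : B.ι}
    (h : (B.bar i).IsInfinite) : i ∉ m.del := by
  intro hi
  have h2 := m.del_short i hi
  rw [length_top h] at h2
  exact (EReal.coe_lt_top (2*δ)).not_ge h2

lemma infinite_of_subset_thicken {δ : ℝ} {I J : Bar} (hJv : J.IsValid)
    (h : I.toSet ⊆ (Bar.thicken δ J).toSet) (hI : I.IsInfinite) : J.IsInfinite := by
  by_contra hJ
  set r := J.2.toReal with hr
  have hJ2 : J.2 = (r : EReal) := (EReal.coe_toReal hJ (ne_bot_of_valid hJv)).symm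
  set x := max I.1 (r + δ) + 1 with hx
  have hmem : x ∈ I.toSet := by
    refine ⟨(le_max_left _ _).trans_lt (lt_add_one _), ?_⟩
    rw [hI]; exact le_top
  have h2 := (h hmem).2
  rw [show (Bar.thicken δ J).2 = J.2 + (δ : EReal) from rfl, hJ2, ← EReal.coe_add,
    EReal.coe_le_coe_iff] at h2
  have := le_max_right I.1 (r + δ)
  linarith

lemma sigmaInf_eq_of_matching {δ : ℝ} {B C : Barcode} (m : Matching δ B C) :
    B.sigmaInf = C.sigmaInf := by
  have h1 : ∀ i : B.ι, (B.bar i).IsInfinite → i ∈ m.delᶜ :=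
    fun i h => infinite_notMem_del m h
  have h1' : ∀ j : C.ι, (C.bar j).IsInfinite → j ∈ m.del'ᶜ :=
    fun j h => infinite_notMem_del m.symm h
  have h2 : ∀ x : ↥(m.delᶜ), (B.bar x).IsInfinite → (C.bar (m.φ x)).IsInfinite :=
    fun x h => infinite_of_subset_thicken (C.valid _) (m.subset x) h
  have h3 : ∀ y : ↥(m.del'ᶜ), (C.bar y).IsInfinite → (B.bar (m.φ.symm y)).IsInfinite := by
    intro y h
    have hs := m.subset' (m.φ.symm y)
    rw [Equiv.apply_symm_apply] at hs
    exact infinite_of_subset_thicken (B.valid _) hs h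
  refine Nat.card_congr ⟨fun i => ⟨(m.φ ⟨i.1, h1 i.1 i.2⟩ : C.ι), h2 _ i.2⟩,
    fun j => ⟨(m.φ.symm ⟨j.1, h1' j.1 j.2⟩ : B.ι), h3 _ j.2⟩, ?_, ?_⟩
  · rintro ⟨i, hi⟩
    apply Subtype.ext
    show (m.φ.symm ⟨(m.φ ⟨i, h1 i hi⟩ : C.ι), _⟩ : B.ι) = i
    rw [Subtype.coe_eta, Equiv.symm_apply_apply]
  · rintro ⟨j, hj⟩
    apply Subtype.ext
    show (m.φ ⟨(m.φ.symm ⟨j, h1' j hj⟩ : B.ι), _⟩ : C.ι) = j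
    rw [Subtype.coe_eta, Equiv.apply_symm_apply]

lemma shift_isInfinite (c : ℝ) (I : Bar) : (I.shift c).IsInfinite ↔ I.IsInfinite := by
  obtain ⟨a, b⟩ := I
  show b + (c : EReal) = ⊤ ↔ b = ⊤
  induction b using EReal.rec with
  | bot => simp
  | top => simp [EReal.top_add_coe]
  | coe b =>
    exact iff_of_false (by rw [← EReal.coe_add]; exact EReal.coe_ne_top _) (EReal.coe_ne_top _)

lemma sigmaInf_shift (c : ℝ) (B : Barcode) : (B.shift c).sigmaInf = B.sigmaInf :=
  Nat.card_congr (Equiv.subtypeEquivRight (fun i => shift_isInfinite c (B.bar i)))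

lemma sigmaInf_eq_of_dHat_lt_top {B C : Barcode} (h : Barcode.dHat B C < ⊤) :
    B.sigmaInf = C.sigmaInf := by
  rw [Barcode.dHat] at h
  obtain ⟨c, hc⟩ : ∃ c : ℝ, Barcode.dBottle B (C.shift c) < ⊤ := by
    by_contra hn
    push_neg at hn
    exact absurd h (not_lt.mpr (le_iInf (fun c => hn c)))
  rw [Barcode.dBottle] at hc
  have hne : {δ : ℝ | 0 ≤ δ ∧ Nonempty (Matching δ B (C.shift c))}.Nonempty := by
    by_contra hn
    rw [Set.not_nonempty_iff_eq_empty] at hn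
    rw [hn] at hc
    simp at hc
  obtain ⟨δ, _, ⟨mm⟩⟩ := hne
  rw [← sigmaInf_shift c C]
  exact sigmaInf_eq_of_matching mm

/-! ### The interpolating family of barcodes -/

section Mid

variable (B B' : Barcode)
  (π : {i : B.ι // (B.bar i).IsInfinite} ≃ {j : B'.ι // (B'.bar j).IsInfinite})

/-- Which indices are kept at time `t`. -/
def keep (t : ℝ) : B.ι ⊕ B'.ι → Prop
  | .inl i => (B.bar i).IsInfinite ∨ t < 1/2
  | .inr j => ¬(B'.bar j).IsInfinite ∧ 1/2 < t

open scoped Classical in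
/-- The bars of the interpolating barcode. -/
noncomputable def midBar (t : ℝ) : B.ι ⊕ B'.ι → Bar
  | .inl i =>
      if h : (B.bar i).IsInfinite then
        ((1 - clamp (2*t)) * (B.bar i).1 + clamp (2*t) * (B'.bar (π ⟨i, h⟩)).1, (⊤ : EReal))
      else ((B.bar i).1, (((B.bar i).1 + clamp (1 - 2*t) * realLen (B.bar i) : ℝ) : EReal))
  | .inr j => ((B'.bar j).1, (((B'.bar j).1 + clamp (2*t - 1) * realLen (B'.bar j) : ℝ) : EReal))

/-- The interpolating barcode at time `t`. -/
noncomputable def mid (t : ℝ) : Barcode where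
  ι := {x : B.ι ⊕ B'.ι // keep B B' t x}
  bar x := midBar B B' π t x.1
  valid := by
    rintro ⟨(i | j), hx⟩
    · simp only [midBar]
      split_ifs with h
      · exact EReal.coe_lt_top _
      · have ht : t < 1/2 := hx.resolve_left h
        rw [Bar.IsValid, EReal.coe_lt_coe_iff]
        have := mul_pos (clamp_pos (by linarith : (0:ℝ) < 1 - 2*t)) (realLen_pos (B.valid i) h)
        linarith
    · simp only [midBar]
      rw [Bar.IsValid, EReal.coe_lt_coe_iff]
      have := mul_pos (clamp_pos (by linarith [hx.2] : (0:ℝ) < 2*t - 1))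
        (realLen_pos (B'.valid j) hx.1)
      linarith
  finLong := by
    intro ε hε
    have hTfin : (Sum.inl '' ({i | (B.bar i).IsInfinite} ∪ {i | (ε:EReal) ≤ (B.bar i).length}) ∪
        Sum.inr '' {j | (ε:EReal) ≤ (B'.bar j).length} : Set (B.ι ⊕ B'.ι)).Finite := by
      apply Set.Finite.union
      · apply Set.Finite.image
        refine Set.Finite.union ?_ (B.finLong ε hε)
        refine (B.finLong 1 one_pos).subset ?_
        intro i hi
        simp only [Set.mem_setOf_eq] at *
        rw [length_top hi]
        exact le_top
      · exact (B'.finLong ε hε).image _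
    apply (hTfin.preimage (Set.injOn_of_injective Subtype.val_injective)).subset
    rintro ⟨x, hx⟩ hlen
    simp only [Set.mem_setOf_eq] at hlen
    simp only [Set.mem_preimage]
    obtain (i | j) := x
    · simp only [midBar] at hlen
      by_cases h : (B.bar i).IsInfinite
      · exact Or.inl (Set.mem_image_of_mem _ (Or.inl h))
      · rw [dif_neg h, length_mk_real] at hlen
        refine Or.inl (Set.mem_image_of_mem _ (Or.inr ?_))
        have hε' := EReal.coe_le_coe_iff.mp hlen
        have hl0 := (realLen_pos (B.valid i) h).le
        show (ε : EReal) ≤ (B.bar i).length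
        rw [length_fin (B.valid i) h, EReal.coe_le_coe_iff]
        calc ε ≤ clamp (1 - 2*t) * realLen (B.bar i) := hε'
          _ ≤ 1 * realLen (B.bar i) :=
            mul_le_mul_of_nonneg_right (clamp_le_one _) hl0
          _ = realLen (B.bar i) := one_mul _
    · simp only [midBar, length_mk_real] at hlen
      refine Or.inr (Set.mem_image_of_mem _ ?_)
      have h : ¬(B'.bar j).IsInfinite := hx.1
      have hε' := EReal.coe_le_coe_iff.mp hlen
      have hl0 := (realLen_pos (B'.valid j) h).le
      show (ε : EReal) ≤ (B'.bar j).length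
      rw [length_fin (B'.valid j) h, EReal.coe_le_coe_iff]
      calc ε ≤ clamp (2*t - 1) * realLen (B'.bar j) := hε'
        _ ≤ 1 * realLen (B'.bar j) := mul_le_mul_of_nonneg_right (clamp_le_one _) hl0
        _ = realLen (B'.bar j) := one_mul _

variable {B B'}

lemma interp_aux {c1 c2 l M Z : ℝ} (h : c1 - c2 ≤ Z) (hl0 : 0 ≤ l) (hlM : l ≤ M)
    (hZ : 0 ≤ Z) : c1 * l ≤ c2 * l + Z * M := by
  nlinarith [mul_le_mul_of_nonneg_right h hl0, mul_le_mul_of_nonneg_left hlM hZ]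

lemma midBar_close {M M' A : ℝ} (hM0 : 0 ≤ M) (hM'0 : 0 ≤ M') (hA0 : 0 ≤ A)
    (hM : ∀ i, ¬(B.bar i).IsInfinite → realLen (B.bar i) ≤ M)
    (hM' : ∀ j, ¬(B'.bar j).IsInfinite → realLen (B'.bar j) ≤ M')
    (hA : ∀ i : {i : B.ι // (B.bar i).IsInfinite}, |(B.bar i.1).1 - (B'.bar (π i)).1| ≤ A)
    (s t : ℝ) (x : B.ι ⊕ B'.ι) (hkeep : keep B B' s x) :
    Close ((2*M + 2*M' + 2*A) * |s - t|) (midBar B B' π s x) (midBar B B' π t x) := by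
  set C := 2*M + 2*M' + 2*A with hC
  have habs : (0:ℝ) ≤ |s - t| := abs_nonneg _
  have hC0 : 0 ≤ C := by positivity
  have hδ0 : 0 ≤ C * |s - t| := by positivity
  have hMC : 2 * |s - t| * M ≤ C * |s - t| := by nlinarith
  have hM'C : 2 * |s - t| * M' ≤ C * |s - t| := by nlinarith
  have hAC : 2 * |s - t| * A ≤ C * |s - t| := by nlinarith
  obtain (i | j) := x
  · by_cases h : (B.bar i).IsInfinite
    · simp only [midBar, dif_pos h]
      refine ⟨?_, ?_, ?_⟩
      · have h1 := clamp_lip_a s t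
        have h2 := hA ⟨i, h⟩
        set a := (B.bar i).1
        set a' := (B'.bar (π ⟨i, h⟩)).1
        have key : |(1 - clamp (2*s)) * a + clamp (2*s) * a' -
            ((1 - clamp (2*t)) * a + clamp (2*t) * a')|
            = |clamp (2*s) - clamp (2*t)| * |a' - a| := by
          rw [← abs_mul]
          congr 1
          ring
        rw [key]
        calc |clamp (2*s) - clamp (2*t)| * |a' - a| ≤ (2*|s-t|) * A := by
              have h2' : |a' - a| ≤ A := by rwa [abs_sub_comm]
              exact mul_le_mul h1 h2' (abs_nonneg _) (by positivity)
          _ ≤ C * |s-t| := by nlinarith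
      · rw [show ((⊤:EReal) + ((C * |s-t| : ℝ) : EReal)) = ⊤ from EReal.top_add_coe _]
      · rw [show ((⊤:EReal) + ((C * |s-t| : ℝ) : EReal)) = ⊤ from EReal.top_add_coe _]
    · simp only [midBar, dif_neg h]
      have hl0 := (realLen_pos (B.valid i) h).le
      have hlM := hM i h
      have h1 := abs_le.mp (clamp_lip_b s t)
      have h1' := abs_le.mp (clamp_lip_b t s)
      rw [abs_sub_comm t s] at h1'
      refine ⟨by simpa using hδ0, ?_, ?_⟩
      · rw [← EReal.coe_add, EReal.coe_le_coe_iff]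
        have := interp_aux h1.2 hl0 hlM (by positivity : (0:ℝ) ≤ 2*|s-t|)
        linarith
      · rw [← EReal.coe_add, EReal.coe_le_coe_iff]
        have := interp_aux h1'.2 hl0 hlM (by positivity : (0:ℝ) ≤ 2*|s-t|)
        linarith
  · have h : ¬(B'.bar j).IsInfinite := hkeep.1
    simp only [midBar]
    have hl0 := (realLen_pos (B'.valid j) h).le
    have hlM := hM' j h
    have h1 := abs_le.mp (clamp_lip_c s t)
    have h1' := abs_le.mp (clamp_lip_c t s)
    rw [abs_sub_comm t s] at h1'
    refine ⟨by simpa using hδ0, ?_, ?_⟩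
    · rw [← EReal.coe_add, EReal.coe_le_coe_iff]
      have := interp_aux h1.2 hl0 hlM (by positivity : (0:ℝ) ≤ 2*|s-t|)
      linarith
    · rw [← EReal.coe_add, EReal.coe_le_coe_iff]
      have := interp_aux h1'.2 hl0 hlM (by positivity : (0:ℝ) ≤ 2*|s-t|)
      linarith

lemma midBar_short {M M' A : ℝ} (hM0 : 0 ≤ M) (hM'0 : 0 ≤ M') (hA0 : 0 ≤ A)
    (hM : ∀ i, ¬(B.bar i).IsInfinite → realLen (B.bar i) ≤ M)
    (hM' : ∀ j, ¬(B'.bar j).IsInfinite → realLen (B'.bar j) ≤ M')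
    (s t : ℝ) (x : B.ι ⊕ B'.ι) (hks : keep B B' s x) (hkt : ¬ keep B B' t x) :
    (midBar B B' π s x).length ≤ ((2 * ((2*M + 2*M' + 2*A) * |s - t|) : ℝ) : EReal) := by
  set C := 2*M + 2*M' + 2*A with hC
  have habs : (0:ℝ) ≤ |s - t| := abs_nonneg _
  obtain (i | j) := x
  · have h : ¬ (B.bar i).IsInfinite := fun hh => hkt (Or.inl hh)
    have hs : s < 1/2 := hks.resolve_left h
    have ht : ¬ (t < 1/2) := fun h' => hkt (Or.inr h')
    simp only [midBar, dif_neg h]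
    rw [length_mk_real, EReal.coe_le_coe_iff]
    have h0 : clamp (1 - 2*t) = 0 := clamp_of_nonpos (by push_neg at ht; linarith)
    have h1 := abs_le.mp (clamp_lip_b s t)
    rw [h0] at h1
    have hl0 := (realLen_pos (B.valid i) h).le
    have hlM := hM i h
    have key : clamp (1 - 2*s) * realLen (B.bar i) ≤ (2*|s-t|) * M := by
      refine mul_le_mul ?_ hlM hl0 (by positivity)
      linarith [h1.2]
    nlinarith
  · have h : ¬ (B'.bar j).IsInfinite := hks.1
    have hs : 1/2 < s := hks.2
    have ht : ¬ (1/2 < t) := fun h' => hkt ⟨h, h'⟩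
    simp only [midBar]
    rw [length_mk_real, EReal.coe_le_coe_iff]
    have h0 : clamp (2*t - 1) = 0 := clamp_of_nonpos (by push_neg at ht; linarith)
    have h1 := abs_le.mp (clamp_lip_c s t)
    rw [h0] at h1
    have hl0 := (realLen_pos (B'.valid j) h).le
    have hlM := hM' j h
    have key : clamp (2*s - 1) * realLen (B'.bar j) ≤ (2*|s-t|) * M' := by
      refine mul_le_mul ?_ hlM hl0 (by positivity)
      linarith [h1.2]
    nlinarith

lemma mid_matching {M M' A : ℝ} (hM0 : 0 ≤ M) (hM'0 : 0 ≤ M') (hA0 : 0 ≤ A)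
    (hM : ∀ i, ¬(B.bar i).IsInfinite → realLen (B.bar i) ≤ M)
    (hM' : ∀ j, ¬(B'.bar j).IsInfinite → realLen (B'.bar j) ≤ M')
    (hA : ∀ i : {i : B.ι // (B.bar i).IsInfinite}, |(B.bar i.1).1 - (B'.bar (π i)).1| ≤ A)
    (s t : ℝ) :
    Nonempty (Matching ((2*M + 2*M' + 2*A) * |s - t|) (mid B B' π s) (mid B B' π t)) := by
  refine ⟨{
    del := {x : (mid B B' π s).ι | ¬ keep B B' t x.1}
    del' := {x : (mid B B' π t).ι | ¬ keep B B' s x.1}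
    del_short := fun x hx => midBar_short π hM0 hM'0 hA0 hM hM' s t x.1 x.2 hx
    del'_short := fun x hx => by
      have h2 := midBar_short π hM0 hM'0 hA0 hM hM' t s x.1 x.2 hx
      rwa [abs_sub_comm t s] at h2
    φ := ⟨fun x => ⟨⟨x.1.1, not_not.mp x.2⟩, not_not_intro x.1.2⟩,
          fun x => ⟨⟨x.1.1, not_not.mp x.2⟩, not_not_intro x.1.2⟩,
          fun x => rfl, fun x => rfl⟩
    subset := fun x =>
      Close.subset (midBar_close π hM0 hM'0 hA0 hM hM' hA s t x.1.1 x.1.2)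
    subset' := fun x =>
      Close.subset (Close.symm (midBar_close π hM0 hM'0 hA0 hM hM' hA s t x.1.1 x.1.2)) }⟩


variable (B B')

private def unmid0 : {x : B.ι ⊕ B'.ι // keep B B' 0 x} → B.ι
  | ⟨.inl i, _⟩ => i
  | ⟨.inr _, h⟩ => absurd h.2 (by norm_num)

lemma equiv_mid_zero : Barcode.Equiv B (mid B B' π 0) := by
  refine ⟨⟨fun i => ⟨Sum.inl i, Or.inr (by norm_num)⟩, unmid0 B B', fun i => rfl, ?_⟩, ?_⟩
  · rintro ⟨(i | j), h⟩
    · rfl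
    · exact absurd h.2 (by norm_num)
  · intro i
    show midBar B B' π 0 (Sum.inl i) = B.bar i
    by_cases h : (B.bar i).IsInfinite
    · simp only [midBar, dif_pos h]
      have hc : clamp (2*(0:ℝ)) = 0 := clamp_of_nonpos (by norm_num)
      conv_rhs => rw [← Prod.mk.eta (p := B.bar i)]
      rw [Prod.mk.injEq]
      constructor
      · rw [hc]; ring
      · exact h.symm
    · simp only [midBar, dif_neg h]
      have hc : clamp (1 - 2*(0:ℝ)) = 1 := clamp_of_one_le (by norm_num)
      conv_rhs => rw [← Prod.mk.eta (p := B.bar i)]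
      rw [Prod.mk.injEq]
      refine ⟨rfl, ?_⟩
      rw [hc, show (B.bar i).1 + 1 * realLen (B.bar i) = (B.bar i).2.toReal by
        unfold realLen; ring]
      exact EReal.coe_toReal h (ne_bot_of_valid (B.valid i))

variable {B B'}

open scoped Classical in
private noncomputable def tomid1 : B'.ι → {x : B.ι ⊕ B'.ι // keep B B' 1 x} := fun j =>
  if h : (B'.bar j).IsInfinite then ⟨.inl (π.symm ⟨j, h⟩).1, Or.inl (π.symm ⟨j, h⟩).2⟩
  else ⟨.inr j, ⟨h, by norm_num⟩⟩

private def unmid1 : {x : B.ι ⊕ B'.ι // keep B B' 1 x} → B'.ι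
  | ⟨.inl i, h⟩ => (π ⟨i, h.resolve_right (by norm_num)⟩).1
  | ⟨.inr j, _⟩ => j

lemma equiv_mid_one : Barcode.Equiv B' (mid B B' π 1) := by
  refine ⟨⟨tomid1 π, unmid1 π, ?_, ?_⟩, ?_⟩
  · intro j
    by_cases h : (B'.bar j).IsInfinite
    · rw [tomid1, dif_pos h]
      show (π ⟨(π.symm ⟨j, h⟩).1, _⟩).1 = j
      rw [Subtype.coe_eta, Equiv.apply_symm_apply]
    · rw [tomid1, dif_neg h]
      rfl
  · rintro ⟨(i | j), h⟩
    · have hi : (B.bar i).IsInfinite := h.resolve_right (by norm_num)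
      show tomid1 π (π ⟨i, _⟩).1 = _
      have h2 : (B'.bar (π ⟨i, hi⟩).1).IsInfinite := (π ⟨i, hi⟩).2
      rw [tomid1, dif_pos h2]
      apply Subtype.ext
      show Sum.inl (π.symm ⟨(π ⟨i, hi⟩).1, h2⟩).1 = Sum.inl i
      rw [Subtype.coe_eta, Equiv.symm_apply_apply]
    · show tomid1 π j = _
      rw [tomid1, dif_neg h.1]
  · intro j
    show midBar B B' π 1 (tomid1 π j).1 = B'.bar j
    by_cases h : (B'.bar j).IsInfinite
    · rw [tomid1, dif_pos h]
      have hi : (B.bar (π.symm ⟨j, h⟩).1).IsInfinite := (π.symm ⟨j, h⟩).2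
      show midBar B B' π 1 (Sum.inl (π.symm ⟨j, h⟩).1) = B'.bar j
      simp only [midBar, dif_pos hi]
      have hc : clamp (2*(1:ℝ)) = 1 := clamp_of_one_le (by norm_num)
      have he : π ⟨(π.symm ⟨j, h⟩).1, hi⟩ = ⟨j, h⟩ := by
        rw [Subtype.coe_eta, Equiv.apply_symm_apply]
      rw [he]
      conv_rhs => rw [← Prod.mk.eta (p := B'.bar j)]
      rw [Prod.mk.injEq]
      constructor
      · rw [hc]; ring
      · exact h.symm
    · rw [tomid1, dif_neg h]
      show midBar B B' π 1 (Sum.inr j) = B'.bar j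
      simp only [midBar]
      have hc : clamp (2*(1:ℝ) - 1) = 1 := clamp_of_one_le (by norm_num)
      conv_rhs => rw [← Prod.mk.eta (p := B'.bar j)]
      rw [Prod.mk.injEq]
      refine ⟨rfl, ?_⟩
      rw [hc, show (B'.bar j).1 + 1 * realLen (B'.bar j) = (B'.bar j).2.toReal by
        unfold realLen; ring]
      exact EReal.coe_toReal h (ne_bot_of_valid (B'.valid j))

end Mid

lemma exists_len_bound (B : Barcode) :
    ∃ M : ℝ, 0 ≤ M ∧ ∀ i, ¬(B.bar i).IsInfinite → realLen (B.bar i) ≤ M := by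
  classical
  refine ⟨1 + ∑ i ∈ (B.finLong 1 one_pos).toFinset, |realLen (B.bar i)|,
    by positivity, ?_⟩
  intro i h
  have hsum0 : (0:ℝ) ≤ ∑ i ∈ (B.finLong 1 one_pos).toFinset, |realLen (B.bar i)| :=
    Finset.sum_nonneg fun _ _ => abs_nonneg _
  by_cases hi : ((1:ℝ) : EReal) ≤ (B.bar i).length
  · have mem : i ∈ (B.finLong 1 one_pos).toFinset := (Set.Finite.mem_toFinset _).mpr hi
    have h2 := Finset.single_le_sum (f := fun i => |realLen (B.bar i)|)
      (fun _ _ => abs_nonneg _) mem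
    linarith [le_abs_self (realLen (B.bar i))]
  · rw [length_fin (B.valid i) h] at hi
    have h2 : ¬ (1:ℝ) ≤ realLen (B.bar i) := fun hh => hi (EReal.coe_le_coe_iff.mpr hh)
    push_neg at h2
    linarith

lemma infinite_set_finite (B : Barcode) : {i : B.ι | (B.bar i).IsInfinite}.Finite :=
  (B.finLong 1 one_pos).subset (fun i hi => by
    simp only [Set.mem_setOf_eq] at *
    rw [length_top hi]
    exact le_top)

end BarcodeAux

end Aux

/-- Two barcodes lie in the same path component of the space
of barcodes modulo shift (with the bottleneck distance) if and only if they
have the same number of semi-infinite bars. -/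
theorem path_component_iff_sigmaInf (B B' : Barcode) :
    (∃ γ : ℝ → Barcode, γ 0 = B ∧ γ 1 = B' ∧
      ∀ t ∈ Set.Icc (0 : ℝ) 1, ∀ ε : ℝ≥0∞, 0 < ε → ∃ η > (0 : ℝ),
        ∀ s ∈ Set.Icc (0 : ℝ) 1, |s - t| < η → Barcode.dHat (γ s) (γ t) < ε) ↔
    Barcode.sigmaInf B = Barcode.sigmaInf B' := by
  open BarcodeAux in
  constructor
  · rintro ⟨γ, h0, h1, hcont⟩
    have hloc : ∀ t ∈ Set.Icc (0:ℝ) 1, ∃ η > (0:ℝ), ∀ s ∈ Set.Icc (0:ℝ) 1,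
        |s - t| < η → (γ s).sigmaInf = (γ t).sigmaInf := by
      intro t ht
      obtain ⟨η, hη, h⟩ := hcont t ht 1 (by norm_num)
      exact ⟨η, hη, fun s hs hst =>
        sigmaInf_eq_of_dHat_lt_top ((h s hs hst).trans_le le_top)⟩
    haveI : PreconnectedSpace (Set.Icc (0:ℝ) 1) :=
      Subtype.preconnectedSpace isPreconnected_Icc
    have hlc : IsLocallyConstant (fun x : Set.Icc (0:ℝ) 1 => (γ x.1).sigmaInf) := by
      rw [IsLocallyConstant.iff_exists_open]
      rintro ⟨t, ht⟩
      obtain ⟨η, hη, h⟩ := hloc t ht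
      refine ⟨Subtype.val ⁻¹' Metric.ball t η,
        Metric.isOpen_ball.preimage continuous_subtype_val, ?_, ?_⟩
      · simp only [Set.mem_preimage, Metric.mem_ball, dist_self]
        exact hη
      · rintro ⟨s, hs⟩ hmem
        exact h s hs (by simpa [Metric.mem_ball, Real.dist_eq] using hmem)
    have h01 := hlc.apply_eq_of_isPreconnected isPreconnected_univ
      (x := ⟨0, by norm_num⟩) (y := ⟨1, by norm_num⟩) trivial trivial
    have h01' : (γ 0).sigmaInf = (γ 1).sigmaInf := h01
    rw [h0, h1] at h01'
    exact h01'
  · intro hσ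
    classical
    haveI fB : Fintype {i : B.ι // (B.bar i).IsInfinite} := (infinite_set_finite B).fintype
    haveI fB' : Fintype {j : B'.ι // (B'.bar j).IsInfinite} := (infinite_set_finite B').fintype
    obtain ⟨π⟩ : Nonempty
        ({i : B.ι // (B.bar i).IsInfinite} ≃ {j : B'.ι // (B'.bar j).IsInfinite}) := by
      rw [Barcode.sigmaInf, Barcode.sigmaInf, Nat.card_eq_fintype_card,
        Nat.card_eq_fintype_card] at hσ
      exact Fintype.card_eq.mp hσ
    obtain ⟨M, hM0, hM⟩ := exists_len_bound B
    obtain ⟨M', hM'0, hM'⟩ := exists_len_bound B'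
    obtain ⟨A, hA0, hA⟩ : ∃ A : ℝ, 0 ≤ A ∧ ∀ i : {i : B.ι // (B.bar i).IsInfinite},
        |(B.bar i.1).1 - (B'.bar (π i)).1| ≤ A :=
      ⟨∑ i : {i : B.ι // (B.bar i).IsInfinite}, |(B.bar i.1).1 - (B'.bar (π i)).1|,
        Finset.sum_nonneg fun _ _ => abs_nonneg _,
        fun i => Finset.single_le_sum
          (f := fun i : {i : B.ι // (B.bar i).IsInfinite} => |(B.bar i.1).1 - (B'.bar (π i)).1|)
          (fun _ _ => abs_nonneg _) (Finset.mem_univ i)⟩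
    have hCpos : (0:ℝ) < 2*M + 2*M' + 2*A + 1 := by linarith
    refine ⟨fun t => if t ≤ 0 then B else if 1 ≤ t then B' else mid B B' π t,
      by norm_num, by norm_num, ?_⟩
    have hγmid : ∀ r ∈ Set.Icc (0:ℝ) 1, Barcode.Equiv
        ((fun t => if t ≤ 0 then B else if 1 ≤ t then B' else mid B B' π t) r)
        (mid B B' π r) := by
      intro r hr
      show Barcode.Equiv (if r ≤ 0 then B else if 1 ≤ r then B' else mid B B' π r)
        (mid B B' π r)
      by_cases hr0 : r ≤ 0
      · have : r = 0 := le_antisymm hr0 hr.1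
        subst this
        rw [if_pos le_rfl]
        exact equiv_mid_zero B B' π
      · by_cases hr1 : 1 ≤ r
        · have : r = 1 := le_antisymm hr.2 hr1
          subst this
          rw [if_neg (by norm_num), if_pos le_rfl]
          exact equiv_mid_one π
        · rw [if_neg hr0, if_neg hr1]
          exact equiv_of_eq rfl
    intro t ht ε hε
    obtain ⟨r, hr0, hrε⟩ : ∃ r : ℝ, 0 < r ∧ ENNReal.ofReal r < ε := by
      rcases eq_or_ne ε ⊤ with rfl | htop
      · exact ⟨1, one_pos, by simp⟩
      · have hpos := ENNReal.toReal_pos hε.ne' htop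
        refine ⟨ε.toReal / 2, by positivity, ?_⟩
        rw [ENNReal.ofReal_lt_iff_lt_toReal (by positivity) htop]
        linarith
    refine ⟨r / (2*M + 2*M' + 2*A + 1), by positivity, ?_⟩
    intro s hs hst
    have hmm : Nonempty (Barcode.Matching ((2*M + 2*M' + 2*A) * |s - t|)
        ((fun t => if t ≤ 0 then B else if 1 ≤ t then B' else mid B B' π t) s)
        ((fun t => if t ≤ 0 then B else if 1 ≤ t then B' else mid B B' π t) t)) := by
      have hmid := mid_matching π hM0 hM'0 hA0 hM hM' hA s t
      exact matching_congrLeft (hγmid s hs) (matching_congrRight (hγmid t ht) hmid)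
    have hd := dHat_le_of_matching (by positivity) hmm
    refine lt_of_le_of_lt hd ?_
    refine lt_trans ((ENNReal.ofReal_lt_ofReal_iff hr0).mpr ?_) hrε
    have h2 : |s - t| * (2*M + 2*M' + 2*A + 1) < r := (lt_div_iff₀ hCpos).mp hst
    nlinarith [abs_nonneg (s - t)]
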